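/- Let 0 < α < 1 and λ > 0, and set f(τ) := E_{α,1}(−λ τ^α) for τ > 0. Then for every t > 0 the left Caputo fractional derivative of f of order α satisfies ∂_t^α f(t) = −λ E_{α,1}(−λ t^α), i.e. (1/Γ(1−α)) ∫_0^t f'(τ) (t−τ)^{−α} dτ = −λ E_{α,1}(−λ t^α), where f'(τ) = −λ τ^{α−1} E_{α,α}(−λ τ^α) is the derivative of f at τ. -/

import Mathlib

/-- The real Mittag-Leffler function `E_{α,β}(x) = ∑ xᵏ / Γ(αk + β)`. -/
noncomputable def mittagLefflerReal (α β x : ℝ) : ℝ :=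
  ∑' k : ℕ, x ^ k / Real.Gamma (α * k + β)

open MeasureTheory Real Set

lemma gamma_mul_pow_le {y : ℝ} (hy : 2 ≤ y) : ∀ n : ℕ, Real.Gamma y * y ^ n ≤ Real.Gamma (y + n) := by
  intro n
  induction n with
  | zero => simp
  | succ n ih =>
    have hpos : (0:ℝ) < y + n := by positivity
    have h1 : Real.Gamma (y + (↑n+1) : ℝ) = (y + n) * Real.Gamma (y + n) := by
      have := Real.Gamma_add_one (ne_of_gt hpos)
      rw [← this]; ring_nf
    have hGnn : 0 ≤ Real.Gamma (y + n) := (Real.Gamma_pos_of_pos hpos).le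
    have h2 : y * (Real.Gamma y * y ^ n) ≤ y * Real.Gamma (y + n) :=
      mul_le_mul_of_nonneg_left ih (by linarith)
    have h3 : y * Real.Gamma (y + n) ≤ (y + n) * Real.Gamma (y + n) :=
      mul_le_mul_of_nonneg_right (by have : (0:ℝ) ≤ n := Nat.cast_nonneg n; linarith) hGnn
    have : Real.Gamma y * y ^ (n+1) = y * (Real.Gamma y * y ^ n) := by ring
    push_cast
    rw [h1, this]
    linarith

lemma one_le_Gamma_of_two_le {y : ℝ} (hy : 2 ≤ y) : 1 ≤ Real.Gamma y := by
  have h2 : Real.Gamma 2 = 1 := by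
    rw [show (2:ℝ) = 1 + 1 by norm_num, Real.Gamma_add_one one_ne_zero, Real.Gamma_one]; ring
  rcases eq_or_lt_of_le hy with h | h
  · rw [← h, h2]
  · have := Real.Gamma_strictMonoOn_Ici (Set.mem_Ici.2 le_rfl) (Set.mem_Ici.2 hy) h
    rw [h2] at this; exact this.le

lemma ml_abs_summable (α β x : ℝ) (hα : 0 < α) (hβ : 0 < β) :
    Summable (fun k : ℕ => |x| ^ k / Real.Gamma (α * k + β)) := by
  set c : ℝ := max 2 ((2 * |x|) ^ α⁻¹) with hcdef
  have hc2 : (2:ℝ) ≤ c := le_max_left _ _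
  have hc1 : (1:ℝ) ≤ c := by linarith
  have hc0 : (0:ℝ) < c := by linarith
  have hcx : 2 * |x| ≤ c ^ α := by
    have h1 : (2 * |x|) ^ α⁻¹ ≤ c := le_max_right _ _
    have h2 : ((2 * |x|) ^ α⁻¹) ^ α ≤ c ^ α :=
      Real.rpow_le_rpow (Real.rpow_nonneg (by positivity) _) h1 hα.le
    rwa [Real.rpow_inv_rpow (by positivity) (ne_of_gt hα)] at h2
  apply summable_of_isBigO_nat (summable_geometric_of_lt_one (by norm_num) (by norm_num : (1:ℝ)/2 < 1))
  rw [Asymptotics.isBigO_iff]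
  refine ⟨c ^ (c + 1), ?_⟩
  filter_upwards [Filter.eventually_ge_atTop ⌈(c+1)/α⌉₊] with k hk
  have hk' : c + 1 ≤ α * k := by
    have := (Nat.ceil_le.1 hk)
    have h := mul_le_mul_of_nonneg_left ((div_le_iff₀ hα).1 this) hα.le
    calc c + 1 = α * ((c+1)/α) := by field_simp
    _ ≤ α * k := by
        apply mul_le_mul_of_nonneg_left _ hα.le
        exact_mod_cast (Nat.ceil_le.1 hk)
  set n : ℕ := ⌊α * k + β - c⌋₊ with hndef
  have hsub0 : (0:ℝ) ≤ α * k + β - c := by linarith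
  have hn1 : (n:ℝ) ≤ α * k + β - c := Nat.floor_le hsub0
  have hn2 : α * k + β - c - 1 < n := by
    have := Nat.lt_floor_add_one (α * k + β - c)
    linarith
  set y : ℝ := α * k + β - n with hydef
  have hyc : c ≤ y := by simp only [hydef]; linarith
  have hy2 : 2 ≤ y := le_trans hc2 hyc
  have harg : α * k + β = y + n := by simp only [hydef]; ring
  have hG1 : Real.Gamma y * y ^ n ≤ Real.Gamma (α * k + β) := by
    rw [harg]; exact gamma_mul_pow_le hy2 n
  have hG2 : (c:ℝ) ^ (n:ℕ) ≤ Real.Gamma y * y ^ n := by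
    calc (c:ℝ) ^ n ≤ y ^ n := pow_le_pow_left₀ hc0.le hyc n
    _ = 1 * y ^ n := (one_mul _).symm
    _ ≤ Real.Gamma y * y ^ n :=
        mul_le_mul_of_nonneg_right (one_le_Gamma_of_two_le hy2) (by positivity)
  have hG3 : c ^ (α * k - (c + 1)) ≤ (c:ℝ) ^ (n:ℕ) := by
    rw [← Real.rpow_natCast c n]
    apply Real.rpow_le_rpow_of_exponent_le hc1
    linarith
  have hGpos : 0 < Real.Gamma (α * k + β) := Real.Gamma_pos_of_pos (by positivity)
  have hGbig : c ^ (α * k - (c+1)) ≤ Real.Gamma (α * k + β) := le_trans hG3 (le_trans hG2 hG1)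
  have hckalt : c ^ (α * k - (c+1)) = (c ^ α) ^ k / c ^ (c+1) := by
    rw [Real.rpow_sub hc0, ← Real.rpow_natCast (c ^ α) k, ← Real.rpow_mul hc0.le]
  have hnorm : ‖|x| ^ k / Real.Gamma (α * k + β)‖ = |x| ^ k / Real.Gamma (α * k + β) := by
    rw [Real.norm_eq_abs, abs_of_nonneg]; positivity
  rw [hnorm, Real.norm_eq_abs]
  have hb1 : |x| ^ k / Real.Gamma (α * k + β) ≤ |x| ^ k / (c ^ (α * k - (c+1))) := by
    apply div_le_div_of_nonneg_left (by positivity) (by positivity) hGbig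
  have hb2 : |x| ^ k / (c ^ (α * k - (c+1))) = c ^ (c+1) * (|x| / c ^ α) ^ k := by
    rw [hckalt, div_pow]
    have : ((c:ℝ) ^ α) ^ k ≠ 0 := by positivity
    field_simp
  have hb3 : (|x| / c ^ α) ^ k ≤ (1/2) ^ k := by
    apply pow_le_pow_left₀ (by positivity)
    rw [div_le_div_iff₀ (by positivity) (by norm_num)]
    linarith
  calc |x| ^ k / Real.Gamma (α * k + β) ≤ c ^ (c+1) * (|x| / c ^ α) ^ k := by rw [← hb2]; exact hb1
  _ ≤ c ^ (c+1) * (1/2) ^ k := mul_le_mul_of_nonneg_left hb3 (by positivity)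
  _ ≤ c ^ (c+1) * |(1/2) ^ k| := by
      apply mul_le_mul_of_nonneg_left (le_abs_self _) (by positivity)

lemma ml_summable (α β x : ℝ) (hα : 0 < α) (hβ : 0 < β) :
    Summable (fun k : ℕ => x ^ k / Real.Gamma (α * k + β)) := by
  apply Summable.of_abs
  have := ml_abs_summable α β x hα hβ
  refine this.congr (fun k => ?_)
  have hGpos : 0 < Real.Gamma (α * k + β) := Real.Gamma_pos_of_pos (by positivity)
  rw [abs_div, abs_pow, abs_of_pos hGpos]

lemma betaIntegrable {a b t : ℝ} (ha : 0 < a) (hb : 0 < b) (ht : 0 < t) :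
    IntervalIntegrable (fun x => x ^ (a-1) * (t - x) ^ (b-1)) volume 0 t := by
  have h1 : IntervalIntegrable (fun x => x ^ (a-1) * (t - x) ^ (b-1)) volume 0 (t/2) := by
    apply (intervalIntegral.intervalIntegrable_rpow' (by linarith)).mul_continuousOn
    apply ContinuousOn.rpow_const (continuous_const.sub continuous_id).continuousOn
    intro x hx
    left
    rw [Set.uIcc_of_le (by linarith)] at hx
    have := hx.2
    intro h
    have : t - x = 0 := h
    linarith
  have hbase : IntervalIntegrable (fun x => (t - x) ^ (b-1)) volume (t/2) t := by
    have h0 : IntervalIntegrable (fun y : ℝ => y ^ (b-1)) volume 0 (t/2) :=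
      intervalIntegral.intervalIntegrable_rpow' (by linarith)
    simpa [sub_zero, show t - t/2 = t/2 by ring] using (h0.comp_sub_left t).symm
  have h2 : IntervalIntegrable (fun x => x ^ (a-1) * (t - x) ^ (b-1)) volume (t/2) t := by
    have hcont : ContinuousOn (fun x : ℝ => x ^ (a-1)) (Set.uIcc (t/2) t) := by
      apply ContinuousOn.rpow_const continuousOn_id
      intro x hx
      left
      rw [Set.uIcc_of_le (by linarith)] at hx
      have := hx.1
      intro h; simp only [id_eq] at h; rw [h] at this; linarith
    have := hbase.mul_continuousOn hcont
    simpa [mul_comm] using this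
  exact h1.trans h2

lemma betaValue {a b t : ℝ} (ha : 0 < a) (hb : 0 < b) (ht : 0 < t) :
    ∫ x in (0:ℝ)..t, x ^ (a-1) * (t - x) ^ (b-1)
      = Real.Gamma a * Real.Gamma b / Real.Gamma (a+b) * t ^ (a+b-1) := by
  have habpos : 0 < a + b := by linarith
  have hGa : (0:ℝ) < Real.Gamma (a+b) := Real.Gamma_pos_of_pos habpos
  have hscaled := Complex.betaIntegral_scaled (a : ℂ) (b : ℂ) ht
  have hB : Complex.betaIntegral a b
      = Complex.Gamma a * Complex.Gamma b / Complex.Gamma (a+b) := by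
    have hmul := Complex.Gamma_mul_Gamma_eq_betaIntegral
      (show 0 < (a:ℂ).re by simpa using ha) (show 0 < (b:ℂ).re by simpa using hb)
    have hne : Complex.Gamma ((a:ℂ)+b) ≠ 0 := by
      rw [show ((a:ℂ)+b) = ((a+b:ℝ):ℂ) by push_cast; ring, Complex.Gamma_ofReal]
      exact_mod_cast ne_of_gt hGa
    field_simp
    rw [hmul]
    ring
  have key : ((∫ x in (0:ℝ)..t, x ^ (a-1) * (t - x) ^ (b-1) : ℝ) : ℂ)
      = ∫ x in (0:ℝ)..t, (x:ℂ) ^ ((a:ℂ)-1) * (((t:ℂ))-x) ^ ((b:ℂ)-1) := by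
    rw [← intervalIntegral.integral_ofReal]
    apply intervalIntegral.integral_congr
    intro x hx
    rw [Set.uIcc_of_le ht.le] at hx
    simp only []
    rw [Complex.ofReal_mul, Complex.ofReal_cpow hx.1, Complex.ofReal_cpow (by linarith [hx.2] : (0:ℝ) ≤ t - x)]
    push_cast
    ring
  rw [hscaled, hB] at key
  apply Complex.ofReal_injective
  rw [key]
  rw [show ((a:ℂ) + b - 1) = ((a+b-1:ℝ):ℂ) by push_cast; ring,
    show ((a:ℂ) + b) = ((a+b:ℝ):ℂ) by push_cast; ring,
    ← Complex.ofReal_cpow ht.le, Complex.Gamma_ofReal, Complex.Gamma_ofReal,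
    Complex.Gamma_ofReal]
  push_cast
  ring

/-- For `0 < α < 1`, `λ > 0` and `t > 0`, the left Caputo fractional derivative of order `α`
of `f(τ) = E_{α,1}(−λ τᵅ)` equals `−λ E_{α,1}(−λ tᵅ)`:
`(1/Γ(1−α)) ∫₀ᵗ f'(τ) (t−τ)^(−α) dτ = −λ E_{α,1}(−λ tᵅ)`,
where `f'(τ) = −λ τ^(α−1) E_{α,α}(−λ τᵅ)`. -/
theorem caputo_deriv_mittagLeffler (α l : ℝ) (hα0 : 0 < α) (hα1 : α < 1) (hl : 0 < l)
    (t : ℝ) (ht : 0 < t) :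
    (1 / Real.Gamma (1 - α)) *
        ∫ τ in (0 : ℝ)..t,
          (-l * τ ^ (α - 1) * mittagLefflerReal α α (-l * τ ^ α)) * (t - τ) ^ (-α) =
      -l * mittagLefflerReal α 1 (-l * t ^ α) := by

  have ht0 : (0:ℝ) ≤ t := ht.le
  have h1α : (0:ℝ) < 1 - α := by linarith
  have hΓ1α : 0 < Real.Gamma (1 - α) := Real.Gamma_pos_of_pos h1α
  set F : ℕ → ℝ → ℝ := fun k τ =>
    ((-l)^(k+1) / Real.Gamma (α*k+α)) * (τ ^ (α*k+α-1) * (t-τ) ^ (-α)) with hF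
  have hargpos : ∀ k : ℕ, (0:ℝ) < α*k+α := fun k => by positivity
  have hGpos : ∀ k : ℕ, (0:ℝ) < Real.Gamma (α*k+α) :=
    fun k => Real.Gamma_pos_of_pos (hargpos k)
  have hexp : (1-α)-1 = -α := by ring
  -- generic value of the beta-type integral
  have hInt : ∀ (C : ℝ) (k : ℕ),
      ∫ τ in Set.Ioc (0:ℝ) t, C * (τ ^ (α*k+α-1) * (t-τ) ^ (-α))
        = C * (Real.Gamma (α*k+α) * Real.Gamma (1-α) / Real.Gamma (α*k+1) * t ^ (α*k)) := by
    intro C k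
    rw [← intervalIntegral.integral_of_le ht0, intervalIntegral.integral_const_mul]
    have hBV := betaValue (hargpos k) h1α ht
    rw [hexp, show α*(k:ℝ)+α+(1-α) = α*k+1 by ring] at hBV
    rw [show α*(k:ℝ)+1-1 = α*k by ring] at hBV
    rw [hBV]
  -- integrability
  have hFint : ∀ k : ℕ, Integrable (F k) (volume.restrict (Set.Ioc 0 t)) := by
    intro k
    have h := (betaIntegrable (hargpos k) h1α ht).const_mul
      ((-l)^(k+1) / Real.Gamma (α*k+α))
    rw [hexp] at h
    rw [intervalIntegrable_iff_integrableOn_Ioc_of_le ht0] at h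
    exact h
  -- norm integrals and their summability
  have hFnorm : ∀ k : ℕ, ∫ τ in Set.Ioc (0:ℝ) t, ‖F k τ‖
      = (l * Real.Gamma (1-α)) * ((l * t^α)^k / Real.Gamma (α*k+1)) := by
    intro k
    have hcongr : ∀ τ ∈ Set.Ioc (0:ℝ) t, ‖F k τ‖
        = (l^(k+1) / Real.Gamma (α*k+α)) * (τ ^ (α*k+α-1) * (t-τ) ^ (-α)) := by
      intro τ hτ
      have h1 : 0 ≤ τ ^ (α*k+α-1) := Real.rpow_nonneg hτ.1.le _
      have h2 : 0 ≤ (t-τ)^(-α) := Real.rpow_nonneg (by linarith [hτ.2]) _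
      rw [Real.norm_eq_abs, hF]
      simp only []
      rw [abs_mul, abs_div, abs_pow, abs_neg, abs_of_pos hl, abs_of_pos (hGpos k),
        abs_of_nonneg (mul_nonneg h1 h2)]
    rw [setIntegral_congr_fun measurableSet_Ioc hcongr, hInt]
    have hG : Real.Gamma (α*k+α) ≠ 0 := ne_of_gt (hGpos k)
    have hp : (l * t^α)^k = l^k * t^(α*k) := by
      rw [mul_pow, ← Real.rpow_natCast (t^α) k, ← Real.rpow_mul ht0]
    rw [hp]
    field_simp
    ring
  have hsum : Summable (fun k => ∫ τ in Set.Ioc (0:ℝ) t, ‖F k τ‖) := by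
    apply Summable.congr _ (fun k => (hFnorm k).symm)
    apply Summable.mul_left
    have := ml_abs_summable α 1 (l * t^α) hα0 one_pos
    apply this.congr
    intro k
    rw [abs_of_nonneg (by positivity : (0:ℝ) ≤ l * t^α)]
  -- pointwise identity
  have hpt : ∀ τ ∈ Set.Ioc (0:ℝ) t,
      (-l * τ ^ (α-1) * mittagLefflerReal α α (-l * τ ^ α)) * (t - τ) ^ (-α)
        = ∑' k, F k τ := by
    intro τ hτ
    obtain ⟨hτ0, hτt⟩ := hτ
    rw [mittagLefflerReal]
    rw [show (-l * τ^(α-1) * (∑' k:ℕ, (-l*τ^α)^k / Real.Gamma (α*k+α))) * (t-τ)^(-α)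
        = ∑' k:ℕ, ((-l*τ^α)^k / Real.Gamma (α*k+α)) * (-l * τ^(α-1) * (t-τ)^(-α)) by
      rw [tsum_mul_right]; ring]
    apply tsum_congr
    intro k
    have hτα : (-l*τ^α)^k = (-l)^k * τ^(α*k) := by
      rw [mul_pow, ← Real.rpow_natCast (τ^α) k, ← Real.rpow_mul hτ0.le]
    have hmulτ : τ^(α*(k:ℝ)) * τ^(α-1) = τ^(α*k+α-1) := by
      rw [← Real.rpow_add hτ0]; ring_nf
    rw [hτα, hF]
    simp only []
    rw [← hmulτ]
    ring
  -- main computation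
  rw [intervalIntegral.integral_of_le ht0, setIntegral_congr_fun measurableSet_Ioc hpt,
    ← MeasureTheory.integral_tsum_of_summable_integral_norm hFint hsum]
  have hFval : ∀ k : ℕ, ∫ τ in Set.Ioc (0:ℝ) t, F k τ
      = (Real.Gamma (1-α) * -l) * ((-l * t^α)^k / Real.Gamma (α*k+1)) := by
    intro k
    rw [hF]
    simp only []
    rw [hInt]
    have hG : Real.Gamma (α*k+α) ≠ 0 := ne_of_gt (hGpos k)
    have hp : (-l * t^α)^k = (-l)^k * t^(α*k) := by
      rw [mul_pow, ← Real.rpow_natCast (t^α) k, ← Real.rpow_mul ht0]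
    rw [hp]
    field_simp
    ring
  rw [tsum_congr hFval, tsum_mul_left, mittagLefflerReal]
  have hG : Real.Gamma (1-α) ≠ 0 := ne_of_gt hΓ1α
  field_simp
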